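/- Let u : ℝ × ℝ² → ℝ² be a C¹ time-dependent vector field, and let Q : ℝ × ℝ → ℝ² be C² and P : ℝ × ℝ → ℝ² be differentiable in t, satisfying ∂Q/∂t (t,s) = u(t, Q(t,s)) and ∂P/∂t (t,s) = −(D_x u(t, Q(t,s)))ᵀ P(t,s). If the momentum is initially normal to the curve, i.e. P(0,s) · ∂Q/∂s (0,s) = 0 for every s, then the momentum is normal to the curve for all times: P(t,s) · ∂Q/∂s (t,s) = 0 for all t and all s. -/

import Mathlib

open scoped RealInnerProductSpace BigOperators

/-- For a curve `Q(t,s)` embedded in the flow of a `C¹` time-dependent vector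
field `u` (so `∂Q/∂t = u(t, Q)`), with momentum satisfying the adjoint equation
`∂P/∂t = −(D_x u(t, Q))ᵀ P`: if the momentum is initially normal to the curve,
`P(0,s) · ∂Q/∂s(0,s) = 0` for every `s`, then it is normal for all times:
`P(t,s) · ∂Q/∂s(t,s) = 0` for all `t` and `s`. -/
theorem momentum_normal_to_curve_for_all_time
    (u : ℝ × EuclideanSpace ℝ (Fin 2) → EuclideanSpace ℝ (Fin 2))
    (hu : ContDiff ℝ 1 u)
    (Q : ℝ × ℝ → EuclideanSpace ℝ (Fin 2))
    (hQsmooth : ContDiff ℝ 2 Q)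
    (P : ℝ × ℝ → EuclideanSpace ℝ (Fin 2))
    (hQ : ∀ (t s : ℝ),
      HasDerivAt (fun τ => Q (τ, s)) (u (t, Q (t, s))) t)
    (hP : ∀ (t s : ℝ),
      HasDerivAt (fun τ => P (τ, s))
        (-(ContinuousLinearMap.adjoint
            (fderiv ℝ (fun x => u (t, x)) (Q (t, s)))) (P (t, s))) t)
    (h0 : ∀ s : ℝ, ⟪P (0, s), deriv (fun σ => Q (0, σ)) s⟫ = 0) :
    ∀ (t s : ℝ), ⟪P (t, s), deriv (fun σ => Q (t, σ)) s⟫ = 0 := by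
  have hQd : Differentiable ℝ Q := hQsmooth.differentiable (by norm_num)
  have hFd : Differentiable ℝ (fderiv ℝ Q) :=
    (hQsmooth.fderiv_right (m := 1) (le_refl 2)).differentiable (by norm_num)
  have hpath1 : ∀ (t s : ℝ), HasDerivAt (fun τ : ℝ => ((τ, s) : ℝ × ℝ)) (1, 0) t :=
    fun t s => (hasDerivAt_id t).prodMk (hasDerivAt_const t s)
  have hpath2 : ∀ (t s : ℝ), HasDerivAt (fun σ : ℝ => ((t, σ) : ℝ × ℝ)) (0, 1) s :=
    fun t s => (hasDerivAt_const s t).prodMk (hasDerivAt_id s)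
  have hQt : ∀ t s : ℝ, fderiv ℝ Q (t, s) (1, 0) = u (t, Q (t, s)) := fun t s =>
    (((hQd (t, s)).hasFDerivAt.comp_hasDerivAt t (hpath1 t s)).unique (hQ t s))
  have hQs : ∀ t s : ℝ, deriv (fun σ => Q (t, σ)) s = fderiv ℝ Q (t, s) (0, 1) := fun t s =>
    ((hQd (t, s)).hasFDerivAt.comp_hasDerivAt s (hpath2 t s)).deriv
  intro t s
  set v : ℝ → EuclideanSpace ℝ (Fin 2) := fun τ => fderiv ℝ Q (τ, s) (0, 1) with hv
  have hvs : ∀ τ : ℝ, HasDerivAt (fun σ => Q (τ, σ)) (v τ) s := fun τ =>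
    (hQd (τ, s)).hasFDerivAt.comp_hasDerivAt s (hpath2 τ s)
  have hvderiv : ∀ τ : ℝ,
      HasDerivAt v ((fderiv ℝ (fun x => u (τ, x)) (Q (τ, s))) (v τ)) τ := by
    intro τ
    have hsym := second_derivative_symmetric (f := Q) (f' := fderiv ℝ Q)
      (f'' := fderiv ℝ (fderiv ℝ Q) (τ, s)) (x := (τ, s))
      (fun y => (hQd y).hasFDerivAt) ((hFd (τ, s)).hasFDerivAt)
    have hF1 : HasDerivAt (fun τ' => fderiv ℝ Q (τ', s))
        (fderiv ℝ (fderiv ℝ Q) (τ, s) (1, 0)) τ :=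
      (hFd (τ, s)).hasFDerivAt.comp_hasDerivAt τ (hpath1 τ s)
    have h1 : HasDerivAt v ((fderiv ℝ (fderiv ℝ Q) (τ, s) (1, 0)) (0, 1)) τ :=
      (ContinuousLinearMap.apply ℝ (EuclideanSpace ℝ (Fin 2))
        (((0 : ℝ), (1 : ℝ)))).hasFDerivAt.comp_hasDerivAt τ hF1
    -- the mixed partial the other way
    have hF2 : HasDerivAt (fun σ => fderiv ℝ Q (τ, σ))
        (fderiv ℝ (fderiv ℝ Q) (τ, s) (0, 1)) s :=
      (hFd (τ, s)).hasFDerivAt.comp_hasDerivAt s (hpath2 τ s)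
    have h2 : HasDerivAt (fun σ => fderiv ℝ Q (τ, σ) ((1 : ℝ), (0 : ℝ)))
        ((fderiv ℝ (fderiv ℝ Q) (τ, s) (0, 1)) (1, 0)) s :=
      (ContinuousLinearMap.apply ℝ (EuclideanSpace ℝ (Fin 2))
        (((1 : ℝ), (0 : ℝ)))).hasFDerivAt.comp_hasDerivAt s hF2
    have heq : (fun σ => fderiv ℝ Q (τ, σ) ((1 : ℝ), (0 : ℝ)))
        = fun σ => u (τ, Q (τ, σ)) := funext fun σ => hQt τ σ
    rw [heq] at h2
    have hux : DifferentiableAt ℝ (fun x => u (τ, x)) (Q (τ, s)) :=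
      (hu.differentiable one_ne_zero (τ, Q (τ, s))).comp (Q (τ, s))
        ((differentiableAt_const τ).prodMk differentiableAt_id)
    have h3 : HasDerivAt (fun σ => u (τ, Q (τ, σ)))
        ((fderiv ℝ (fun x => u (τ, x)) (Q (τ, s))) (v τ)) s :=
      by have := hux.hasFDerivAt.comp_hasDerivAt s (hvs τ); exact this
    have hkey : (fderiv ℝ (fderiv ℝ Q) (τ, s) (1, 0)) (0, 1)
        = (fderiv ℝ (fun x => u (τ, x)) (Q (τ, s))) (v τ) := by
      rw [hsym (1, 0) (0, 1)]
      exact h2.unique h3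
    rwa [hkey] at h1
  have hconst : ∀ τ : ℝ, HasDerivAt (fun τ' => ⟪P (τ', s), v τ'⟫) 0 τ := by
    intro τ
    have h := (hP τ s).inner ℝ (hvderiv τ)
    convert h using 1
    · rfl
    · rfl
    rw [inner_neg_left, ContinuousLinearMap.adjoint_inner_left]
    ring
  have hval : ⟪P (t, s), v t⟫ = ⟪P (0, s), v 0⟫ :=
    is_const_of_deriv_eq_zero (fun τ => (hconst τ).differentiableAt)
      (fun τ => (hconst τ).deriv) t 0
  have h0' := h0 s
  rw [hQs 0 s] at h0'
  rw [hQs t s]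
  exact hval.trans h0'
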